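/- Let f be a holomorphic (ℂ-differentiable) function defined on an open subset O of Mat(2,ℂ) containing all of SL(2,ℂ), and suppose that for every U ∈ SL(2,ℂ) one has (∂₊₊ f)(U) = 0 and (∂₀ f)(U) = 3 f(U) (i.e. f is analytic of charge +3). Then f is a homogeneous cubic polynomial in the entries of the first column of U on SL(2,ℂ): there exist constants c₀, c₁, c₂, c₃ ∈ ℂ such that f(U) = c₀·U₀₀³ + c₁·U₀₀²·U₁₀ + c₂·U₀₀·U₁₀² + c₃·U₁₀³ for all U ∈ SL(2,ℂ). -/

import Mathlib

open Complex Set Bornology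

/-- The determinant of a 2×2 complex matrix, viewed as an element of `Fin 2 → Fin 2 → ℂ`. -/
def det2 (U : Fin 2 → Fin 2 → ℂ) : ℂ := U 0 0 * U 1 1 - U 0 1 * U 1 0

/-- The direction `U·E` with `E = [[0,1],[0,0]]`, defining the fundamental vector
field `∂₊₊` of the right `SL(2,ℂ)`-action: `(U·E)_{i0} = 0`, `(U·E)_{i1} = U_{i0}`. -/
def dirE (U : Fin 2 → Fin 2 → ℂ) : Fin 2 → Fin 2 → ℂ :=
  fun i j => if j = 1 then U i 0 else 0

/-- The direction `U·H` with `H = [[1,0],[0,−1]]`, defining the fundamental vector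
field `∂₀` of the right `SL(2,ℂ)`-action: `(U·H)_{i0} = U_{i0}`, `(U·H)_{i1} = −U_{i1}`. -/
def dirH (U : Fin 2 → Fin 2 → ℂ) : Fin 2 → Fin 2 → ℂ :=
  fun i j => if j = 0 then U i 0 else -(U i 1)

noncomputable section Charge3Aux

/-- Shear of the second column along the first column. -/
private def lineE (U : Fin 2 → Fin 2 → ℂ) (t : ℂ) : Fin 2 → Fin 2 → ℂ :=
  fun i j => if j = 1 then U i 1 + t * U i 0 else U i 0

/-- Scale the first column by `lam`, the second by `lam⁻¹`. -/
private def scl (lam : ℂ) (U : Fin 2 → Fin 2 → ℂ) : Fin 2 → Fin 2 → ℂ :=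
  fun i j => if j = 0 then lam * U i j else lam⁻¹ * U i j

private def mat1 (z : ℂ) : Fin 2 → Fin 2 → ℂ :=
  fun i j => if j = 0 then (if i = 0 then 1 else z) else (if i = 0 then 0 else 1)

private def mat2 (z : ℂ) : Fin 2 → Fin 2 → ℂ :=
  fun i j => if j = 0 then (if i = 0 then z else 1) else (if i = 0 then -1 else 0)

private lemma det2_lineE {U : Fin 2 → Fin 2 → ℂ} (hU : det2 U = 1) (s : ℂ) :
    det2 (lineE U s) = 1 := by
  simp only [det2, lineE] at hU ⊢
  norm_num
  linear_combination hU

private lemma det2_scl {U : Fin 2 → Fin 2 → ℂ} (hU : det2 U = 1) {lam : ℂ} (hl : lam ≠ 0) :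
    det2 (scl lam U) = 1 := by
  simp only [det2, scl] at hU ⊢
  norm_num
  have h1 : lam * lam⁻¹ = 1 := mul_inv_cancel₀ hl
  linear_combination (U 0 0 * U 1 1 - U 0 1 * U 1 0) * h1 + hU

private lemma det2_mat1 (z : ℂ) : det2 (mat1 z) = 1 := by simp [det2, mat1]

private lemma det2_mat2 (z : ℂ) : det2 (mat2 z) = 1 := by simp [det2, mat2]

private lemma diff_mat1 : Differentiable ℂ mat1 := by
  intro z
  rw [differentiableAt_pi]
  intro i
  rw [differentiableAt_pi]
  intro j
  fin_cases i <;> fin_cases j <;> simp [mat1]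

private lemma diff_mat2 : Differentiable ℂ mat2 := by
  intro z
  rw [differentiableAt_pi]
  intro i
  rw [differentiableAt_pi]
  intro j
  fin_cases i <;> fin_cases j <;> simp [mat2]

private lemma const_of_hasDerivAt_zero {F : ℂ → ℂ} (h : ∀ s, HasDerivAt F 0 s) (x y : ℂ) :
    F x = F y :=
  is_const_of_deriv_eq_zero (fun s => (h s).differentiableAt) (fun s => (h s).deriv) x y

section Hyps

variable {O : Set (Fin 2 → Fin 2 → ℂ)} (hO : IsOpen O)
  (hSL : {U : Fin 2 → Fin 2 → ℂ | det2 U = 1} ⊆ O)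
  {f : (Fin 2 → Fin 2 → ℂ) → ℂ} (hf : DifferentiableOn ℂ f O)

include hO hSL hf

private lemma diffAtSL {U : Fin 2 → Fin 2 → ℂ} (hU : det2 U = 1) : DifferentiableAt ℂ f U :=
  hf.differentiableAt (hO.mem_nhds (hSL hU))

private lemma f_lineE
    (hE : ∀ U : Fin 2 → Fin 2 → ℂ, det2 U = 1 → fderiv ℂ f U (dirE U) = 0)
    {U : Fin 2 → Fin 2 → ℂ} (hU : det2 U = 1) (t : ℂ) :
    f (lineE U t) = f U := by
  have hdet : ∀ s : ℂ, det2 (lineE U s) = 1 := det2_lineE hU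
  have key : ∀ s : ℂ, HasDerivAt (fun s => f (lineE U s)) 0 s := by
    intro s
    have hdir : dirE (lineE U s) = fun i j => if j = 1 then U i 0 else 0 := by
      funext i j
      fin_cases j <;> simp [dirE, lineE]
    have hγ : HasDerivAt (fun s => lineE U s) (fun i j => if j = 1 then U i 0 else 0) s := by
      rw [hasDerivAt_pi]
      intro i
      rw [hasDerivAt_pi]
      intro j
      fin_cases j
      · simpa [lineE] using hasDerivAt_const s (U i 0)
      · simpa [lineE] using ((hasDerivAt_id s).mul_const (U i 0)).const_add (U i 1)
    have h0 := hE _ (hdet s)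
    rw [hdir] at h0
    have hc := (diffAtSL hO hSL hf (hdet s)).hasFDerivAt.comp_hasDerivAt s hγ
    rwa [h0] at hc
  have hconst := const_of_hasDerivAt_zero key t 0
  have h00 : lineE U 0 = U := by
    funext i j
    fin_cases j <;> simp [lineE]
  rw [h00] at hconst
  exact hconst

private lemma f_eq_of_col
    (hE : ∀ U : Fin 2 → Fin 2 → ℂ, det2 U = 1 → fderiv ℂ f U (dirE U) = 0)
    {U V : Fin 2 → Fin 2 → ℂ} (hU : det2 U = 1) (hV : det2 V = 1)
    (h00 : V 0 0 = U 0 0) (h10 : V 1 0 = U 1 0) : f V = f U := by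
  simp only [det2] at hU hV
  rw [h00, h10] at hV
  have hab : U 0 0 ≠ 0 ∨ U 1 0 ≠ 0 := by
    by_contra h
    push_neg at h
    rw [h.1, h.2] at hU
    simp at hU
  rcases hab with ha | hb
  · have hVeq : V = lineE U ((V 0 1 - U 0 1) / U 0 0) := by
      funext i j
      fin_cases i <;> fin_cases j <;> simp only [lineE] <;> norm_num
      · exact h00
      · field_simp
        ring
      · exact h10
      · field_simp
        linear_combination hV - hU
    rw [hVeq]
    exact f_lineE hO hSL hf hE (by simpa [det2] using hU) _
  · have hVeq : V = lineE U ((V 1 1 - U 1 1) / U 1 0) := by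
      funext i j
      fin_cases i <;> fin_cases j <;> simp only [lineE] <;> norm_num
      · exact h00
      · field_simp
        linear_combination hU - hV
      · exact h10
      · field_simp
        ring
    rw [hVeq]
    exact f_lineE hO hSL hf hE (by simpa [det2] using hU) _

private lemma f_scl
    (hH : ∀ U : Fin 2 → Fin 2 → ℂ, det2 U = 1 → fderiv ℂ f U (dirH U) = 3 * f U)
    {U : Fin 2 → Fin 2 → ℂ} (hU : det2 U = 1) {lam : ℂ} (hlam : lam ≠ 0) :
    f (scl lam U) = lam ^ 3 * f U := by
  obtain ⟨s0, rfl⟩ : ∃ s, Complex.exp s = lam := ⟨Complex.log lam, Complex.exp_log hlam⟩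
  have hdet : ∀ s : ℂ, det2 (scl (Complex.exp s) U) = 1 :=
    fun s => det2_scl hU (Complex.exp_ne_zero s)
  have key : ∀ s : ℂ,
      HasDerivAt (fun s => Complex.exp (-(3*s)) * f (scl (Complex.exp s) U)) 0 s := by
    intro s
    have hdir : dirH (scl (Complex.exp s) U)
        = fun i j => if j = 0 then Complex.exp s * U i 0 else -((Complex.exp s)⁻¹ * U i 1) := by
      funext i j
      fin_cases j <;> simp [dirH, scl]
    have hδ : HasDerivAt (fun s => scl (Complex.exp s) U)
        (fun i j => if j = 0 then Complex.exp s * U i 0 else -((Complex.exp s)⁻¹ * U i 1)) s := by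
      rw [hasDerivAt_pi]
      intro i
      rw [hasDerivAt_pi]
      intro j
      fin_cases j
      · simpa [scl] using (Complex.hasDerivAt_exp s).mul_const (U i 0)
      · have he : HasDerivAt (fun s : ℂ => (Complex.exp s)⁻¹) (-(Complex.exp s)⁻¹) s := by
          have h := (Complex.hasDerivAt_exp (-s)).comp s ((hasDerivAt_id s).neg)
          simp only [Function.comp_def] at h
          simpa [Complex.exp_neg] using h
        simpa [scl] using he.mul_const (U i 1)
    rw [← hdir] at hδ
    have hc := (diffAtSL hO hSL hf (hdet s)).hasFDerivAt.comp_hasDerivAt s hδ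
    rw [hH _ (hdet s)] at hc
    have hexp : HasDerivAt (fun s : ℂ => Complex.exp (-(3*s)))
        (-3 * Complex.exp (-(3*s))) s := by
      have h := (Complex.hasDerivAt_exp (-(3*s))).comp s
        (((hasDerivAt_id s).const_mul (3:ℂ)).neg)
      simp only [Function.comp_def] at h
      exact (h.congr_deriv (by ring)).congr_of_eventuallyEq (Filter.Eventually.of_forall fun x => rfl)
    have hmul := hexp.mul hc
    simp only [Function.comp_def] at hmul
    exact hmul.congr_deriv (by ring)
  have hconst := const_of_hasDerivAt_zero key s0 0
  have h00 : scl (Complex.exp 0) U = U := by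
    funext i j
    fin_cases j <;> simp [scl]
  rw [h00] at hconst
  simp only [mul_zero, neg_zero, Complex.exp_zero, one_mul] at hconst
  have hcube : Complex.exp (3*s0) = Complex.exp s0 ^ 3 := by
    rw [← Complex.exp_nat_mul]
    norm_num
  have hne : Complex.exp (-(3*s0)) ≠ 0 := Complex.exp_ne_zero _
  rw [Complex.exp_neg] at hconst
  field_simp at hconst
  rw [hconst, ← hcube]

end Hyps

private lemma step_bound {u v : ℂ → ℂ} {u0 : ℂ} {C : ℝ} (hC : 0 ≤ C) (k : ℕ)
    (hu : ∀ z : ℂ, 1 ≤ ‖z‖ → ‖u z‖ ≤ C * ‖z‖ ^ (k+1))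
    (huv : ∀ z, u z = u0 + z * v z) :
    ∀ z : ℂ, 1 ≤ ‖z‖ → ‖v z‖ ≤ (C + ‖u0‖) * ‖z‖ ^ k := by
  intro z hz
  have hzpos : (0:ℝ) < ‖z‖ := by linarith
  have hz0 : z ≠ 0 := norm_pos_iff.mp hzpos
  have hv : v z = (u z - u0) / z := by
    rw [huv z]
    field_simp
    ring
  rw [hv, norm_div, div_le_iff₀ hzpos]
  have h1 : ‖u z - u0‖ ≤ C * ‖z‖ ^ (k+1) + ‖u0‖ :=
    (norm_sub_le _ _).trans (by linarith [hu z hz])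
  have h2 : (1:ℝ) ≤ ‖z‖ ^ (k+1) := one_le_pow₀ hz
  calc ‖u z - u0‖ ≤ C * ‖z‖^(k+1) + ‖u0‖ := h1
    _ ≤ C * ‖z‖^(k+1) + ‖u0‖ * ‖z‖^(k+1) := by nlinarith [norm_nonneg u0]
    _ = (C + ‖u0‖) * ‖z‖^k * ‖z‖ := by rw [pow_succ]; ring

end Charge3Aux

theorem global_charge_three_analytic_is_cubic
    (O : Set (Fin 2 → Fin 2 → ℂ)) (hO : IsOpen O)
    (hSL : {U : Fin 2 → Fin 2 → ℂ | det2 U = 1} ⊆ O)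
    (f : (Fin 2 → Fin 2 → ℂ) → ℂ) (hf : DifferentiableOn ℂ f O)
    (hE : ∀ U : Fin 2 → Fin 2 → ℂ, det2 U = 1 → fderiv ℂ f U (dirE U) = 0)
    (hH : ∀ U : Fin 2 → Fin 2 → ℂ, det2 U = 1 → fderiv ℂ f U (dirH U) = 3 * f U) :
    ∃ c₀ c₁ c₂ c₃ : ℂ, ∀ U : Fin 2 → Fin 2 → ℂ, det2 U = 1 →
      f U = c₀ * (U 0 0) ^ 3 + c₁ * (U 0 0) ^ 2 * U 1 0
          + c₂ * U 0 0 * (U 1 0) ^ 2 + c₃ * (U 1 0) ^ 3 := by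
  classical
  -- the two entire functions g(z) = f [[1,0],[z,1]] and h(z) = f [[z,-1],[1,0]]
  obtain ⟨g, hgdiff, hgval⟩ : ∃ g : ℂ → ℂ, Differentiable ℂ g ∧ ∀ z, g z = f (mat1 z) := by
    refine ⟨fun z => f (mat1 z), ?_, fun z => rfl⟩
    intro z
    exact (diffAtSL hO hSL hf (det2_mat1 z)).comp z (diff_mat1 z)
  obtain ⟨h, hhdiff, hhval⟩ : ∃ h : ℂ → ℂ, Differentiable ℂ h ∧ ∀ z, h z = f (mat2 z) := by
    refine ⟨fun z => f (mat2 z), ?_, fun z => rfl⟩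
    intro z
    exact (diffAtSL hO hSL hf (det2_mat2 z)).comp z (diff_mat2 z)
  -- (I): if U₀₀ ≠ 0 then f U = U₀₀³ g(U₁₀/U₀₀)
  have hI : ∀ U : Fin 2 → Fin 2 → ℂ, det2 U = 1 → U 0 0 ≠ 0 →
      f U = (U 0 0)^3 * g (U 1 0 / U 0 0) := by
    intro U hU ha
    have hW : det2 (scl (U 0 0) (mat1 (U 1 0 / U 0 0))) = 1 := det2_scl (det2_mat1 _) ha
    have h00 : scl (U 0 0) (mat1 (U 1 0 / U 0 0)) 0 0 = U 0 0 := by simp [scl, mat1]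
    have h10 : scl (U 0 0) (mat1 (U 1 0 / U 0 0)) 1 0 = U 1 0 := by
      simp [scl, mat1]
      field_simp
    have hcol := f_eq_of_col hO hSL hf hE hU hW h00 h10
    rw [← hcol, hgval]
    exact f_scl hO hSL hf hH (det2_mat1 _) ha
  -- (II): if U₁₀ ≠ 0 then f U = U₁₀³ h(U₀₀/U₁₀)
  have hII : ∀ U : Fin 2 → Fin 2 → ℂ, det2 U = 1 → U 1 0 ≠ 0 →
      f U = (U 1 0)^3 * h (U 0 0 / U 1 0) := by
    intro U hU hb
    have hW : det2 (scl (U 1 0) (mat2 (U 0 0 / U 1 0))) = 1 := det2_scl (det2_mat2 _) hb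
    have h00 : scl (U 1 0) (mat2 (U 0 0 / U 1 0)) 0 0 = U 0 0 := by
      simp [scl, mat2]
      field_simp
    have h10 : scl (U 1 0) (mat2 (U 0 0 / U 1 0)) 1 0 = U 1 0 := by simp [scl, mat2]
    have hcol := f_eq_of_col hO hSL hf hE hU hW h00 h10
    rw [← hcol, hhval]
    exact f_scl hO hSL hf hH (det2_mat2 _) hb
  -- (III): g z = z³ h(1/z) for z ≠ 0
  have hIII : ∀ z : ℂ, z ≠ 0 → g z = z^3 * h (1/z) := by
    intro z hz
    have h1 : mat1 z 1 0 = z := by simp [mat1]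
    have h2 : mat1 z 0 0 = 1 := by simp [mat1]
    have := hII (mat1 z) (det2_mat1 z) (by rw [h1]; exact hz)
    rw [h1, h2] at this
    rw [hgval, this]
  -- cubic growth bound for g
  obtain ⟨M0, hM0⟩ := (isCompact_closedBall (0:ℂ) 1).exists_bound_of_continuousOn
    hhdiff.continuous.continuousOn
  set M : ℝ := max M0 0 with hMdef
  have hMnn : 0 ≤ M := le_max_right _ _
  have hg3 : ∀ z : ℂ, 1 ≤ ‖z‖ → ‖g z‖ ≤ M * ‖z‖ ^ (2+1) := by
    intro z hz
    have hz0 : z ≠ 0 := norm_pos_iff.mp (by linarith)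
    have hmem : (1:ℂ)/z ∈ Metric.closedBall (0:ℂ) 1 := by
      rw [Metric.mem_closedBall, dist_zero_right, norm_div, norm_one]
      exact div_le_one_of_le₀ hz (by positivity)
    have hb : ‖h (1/z)‖ ≤ M := (hM0 _ hmem).trans (le_max_left _ _)
    rw [hIII z hz0, norm_mul, norm_pow]
    calc ‖z‖^3 * ‖h (1/z)‖ ≤ ‖z‖^3 * M := by
          exact mul_le_mul_of_nonneg_left hb (by positivity)
      _ = M * ‖z‖^(2+1) := by ring
  -- iterated dslopes
  have hdsl : ∀ u : ℂ → ℂ, Differentiable ℂ u → Differentiable ℂ (dslope u 0) := by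
    intro u hu
    rw [← differentiableOn_univ]
    exact (differentiableOn_dslope (by simp)).2 hu.differentiableOn
  have hunf : ∀ (u : ℂ → ℂ) (z : ℂ), u z = u 0 + z * dslope u 0 z := by
    intro u z
    have h := sub_smul_dslope u 0 z
    simp only [sub_zero, smul_eq_mul] at h
    linear_combination -h
  set d1 : ℂ → ℂ := dslope g 0 with hd1def
  set d2 : ℂ → ℂ := dslope d1 0 with hd2def
  set d3 : ℂ → ℂ := dslope d2 0 with hd3def
  have hd1diff : Differentiable ℂ d1 := hdsl g hgdiff
  have hd2diff : Differentiable ℂ d2 := hdsl d1 hd1diff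
  have hd3diff : Differentiable ℂ d3 := hdsl d2 hd2diff
  have b1 := step_bound hMnn 2 hg3 (hunf g)
  have b2 := step_bound (add_nonneg hMnn (norm_nonneg _)) 1 b1 (hunf d1)
  have b3 := step_bound (add_nonneg (add_nonneg hMnn (norm_nonneg _)) (norm_nonneg _)) 0 b2
    (hunf d2)
  -- d3 is bounded, hence constant by Liouville
  obtain ⟨K', hK'⟩ := (isCompact_closedBall (0:ℂ) 1).exists_bound_of_continuousOn
    hd3diff.continuous.continuousOn
  have hbdd : IsBounded (range d3) := by
    rw [isBounded_iff_forall_norm_le]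
    refine ⟨max (((M + ‖g 0‖) + ‖d1 0‖) + ‖d2 0‖) K', ?_⟩
    rintro x ⟨z, rfl⟩
    rcases le_total 1 ‖z‖ with hz | hz
    · have := b3 z hz
      rw [pow_zero, mul_one] at this
      exact this.trans (le_max_left _ _)
    · exact (hK' z (Metric.mem_closedBall.2 (by simpa [dist_zero_right] using hz))).trans
        (le_max_right _ _)
  have hc3 : ∀ z : ℂ, d3 z = d3 0 := fun z => hd3diff.apply_eq_apply_of_bounded hbdd z 0
  -- g is the cubic polynomial with coefficients c₀..c₃
  have gpoly : ∀ z : ℂ, g z = g 0 + d1 0 * z + d2 0 * z^2 + d3 0 * z^3 := by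
    intro z
    have e1 := hunf g z
    have e2 := hunf d1 z
    have e3 := hunf d2 z
    rw [← hd1def] at e1
    rw [← hd2def] at e2
    rw [← hd3def] at e3
    rw [e1, e2, e3, hc3 z]
    ring
  -- h is the reversed cubic polynomial
  have hpoly : ∀ w : ℂ, w ≠ 0 → h w = g 0 * w^3 + d1 0 * w^2 + d2 0 * w + d3 0 := by
    intro w hw
    have hz := hIII w⁻¹ (inv_ne_zero hw)
    rw [one_div, inv_inv] at hz
    have hw3 : h w = w^3 * g w⁻¹ := by
      rw [hz]
      field_simp
    rw [hw3, gpoly w⁻¹]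
    field_simp
  have h0 : h 0 = d3 0 := by
    have hpcont : Continuous (fun w : ℂ => g 0 * w^3 + d1 0 * w^2 + d2 0 * w + d3 0) := by
      fun_prop
    have heq : h = fun w : ℂ => g 0 * w^3 + d1 0 * w^2 + d2 0 * w + d3 0 :=
      Continuous.ext_on (dense_compl_singleton (0:ℂ)) hhdiff.continuous hpcont
        (fun w hw => hpoly w hw)
    rw [heq]
    simp
  -- conclusion
  refine ⟨g 0, d1 0, d2 0, d3 0, ?_⟩
  intro U hU
  by_cases ha : U 0 0 = 0
  · have hb : U 1 0 ≠ 0 := by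
      intro hb
      rw [det2, ha, hb] at hU
      simp at hU
    rw [hII U hU hb, ha, zero_div, h0]
    ring
  · rw [hI U hU ha, gpoly]
    field_simp
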